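/- Let G be a finite simple graph with a proper vertex coloring γ using colors {0, …, c−1}, and let ω0 be the orientation of G that directs each edge from its endpoint of larger color to its endpoint of smaller color (ω0 is acyclic). Then for every simple cycle κ of G, both c+(κ,ω0) and c−(κ,ω0) are at least |κ|/c; that is, min(c+(κ,ω0), c−(κ,ω0)) ≥ |κ|/c. (Combined with the formula Conc(ω0) = min_κ min(c+(κ,ω0), c−(κ,ω0))/|κ|, this yields the inequality χ̄(G) ≤ χ(G) between the interleaved multichromatic number and the chromatic number of G.) -/

import Mathlib

variable {V : Type*}

private lemma telescope_darts {G : SimpleGraph V} (f : V → ℤ) :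
    ∀ {u v : V} (p : G.Walk u v),
      (p.darts.map (fun d => f d.toProd.2 - f d.toProd.1)).sum = f v - f u := by
  intro u v p
  induction p with
  | nil => simp
  | cons h p ih => simp [ih]

private lemma dart_sum_bounds {c : ℕ} {G : SimpleGraph V} (γ : V → Fin c)
    (hγ : ∀ u v, G.Adj u v → γ u ≠ γ v) (l : List G.Dart) :
    ((l.length : ℤ) - c * l.countP (fun d => decide (γ d.toProd.2 < γ d.toProd.1))
       ≤ (l.map (fun d => (γ d.toProd.2 : ℤ) - (γ d.toProd.1 : ℤ))).sum)
    ∧ ((l.map (fun d => (γ d.toProd.2 : ℤ) - (γ d.toProd.1 : ℤ))).sum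
       ≤ c * l.countP (fun d => decide (γ d.toProd.1 < γ d.toProd.2)) - l.length) := by
  induction l with
  | nil => simp
  | cons d l ih =>
    have hne : γ d.toProd.1 ≠ γ d.toProd.2 := hγ _ _ d.adj
    have hne' : (γ d.toProd.1 : ℕ) ≠ (γ d.toProd.2 : ℕ) := fun h => hne (Fin.ext h)
    have h1 : ((γ d.toProd.1 : ℕ) : ℤ) < c := by exact_mod_cast (γ d.toProd.1).isLt
    have h2 : ((γ d.toProd.2 : ℕ) : ℤ) < c := by exact_mod_cast (γ d.toProd.2).isLt
    have h3 : (0 : ℤ) ≤ ((γ d.toProd.1 : ℕ) : ℤ) := Int.ofNat_nonneg _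
    have h4 : (0 : ℤ) ≤ ((γ d.toProd.2 : ℕ) : ℤ) := Int.ofNat_nonneg _
    have h5 : ((γ d.toProd.1 : ℕ) : ℤ) ≠ ((γ d.toProd.2 : ℕ) : ℤ) := by
      exact_mod_cast hne'
    obtain ⟨ih1, ih2⟩ := ih
    constructor <;> simp only [List.map_cons, List.sum_cons, List.countP_cons,
      List.length_cons] <;>
    · rcases lt_trichotomy (γ d.toProd.1) (γ d.toProd.2) with h | h | h
      · have hlt : ((γ d.toProd.1 : ℕ) : ℤ) < ((γ d.toProd.2 : ℕ) : ℤ) := by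
          exact_mod_cast h
        simp only [h, not_lt.mpr h.le, decide_true, decide_false, if_true, if_false]
        push_cast [mul_add, mul_one]
        linarith
      · exact absurd h hne
      · have hlt : ((γ d.toProd.2 : ℕ) : ℤ) < ((γ d.toProd.1 : ℕ) : ℤ) := by
          exact_mod_cast h
        simp only [h, not_lt.mpr h.le, decide_true, decide_false, if_true, if_false]
        push_cast [mul_add, mul_one]
        linarith

/-- Given a proper coloring `γ` of the finite simple graph `G` with colors
`{0, …, c − 1}`, the orientation `ω0` directing each edge from its endpoint of larger
color to its endpoint of smaller color is acyclic, and for every simple cycle `κ` of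
`G` both `c⁺(κ, ω0)` and `c⁻(κ, ω0)` (the numbers of edges of `κ` oriented along each
of the two traversal directions) are at least `|κ| / c`; that is,
`min (c⁺(κ, ω0)) (c⁻(κ, ω0)) ≥ |κ| / c`. (Combined with the concurrency formula, this
yields `χ̄(G) ≤ χ(G)`.) -/
theorem coloring_orientation_cycle_bound [Fintype V]
    (G : SimpleGraph V) (c : ℕ) (γ : V → Fin c)
    (hγ : ∀ u v, G.Adj u v → γ u ≠ γ v)
    (ω0 : V → V → Prop)
    (hω0 : ∀ u v, ω0 u v ↔ G.Adj u v ∧ γ v < γ u) :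
    (∀ v, ¬ Relation.TransGen ω0 v v) ∧
      ∀ (w : V) (κ : G.Walk w w), κ.IsCycle →
        (κ.length : ℚ) / (c : ℚ) ≤
          min ((κ.darts.countP (fun d => decide (γ d.toProd.2 < γ d.toProd.1))) : ℚ)
            ((κ.darts.countP (fun d => decide (γ d.toProd.1 < γ d.toProd.2))) : ℚ) := by
  constructor
  · intro v hv
    have key : ∀ a b, Relation.TransGen ω0 a b → γ b < γ a := by
      intro a b h
      induction h with
      | single h => exact ((hω0 _ _).1 h).2
      | tail _ h2 ih => exact lt_trans ((hω0 _ _).1 h2).2 ih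
    exact lt_irrefl _ (key v v hv)
  · intro w κ _
    have hc : 0 < c := (γ w).pos
    have hcQ : (0 : ℚ) < c := by exact_mod_cast hc
    obtain ⟨hb1, hb2⟩ := dart_sum_bounds γ hγ κ.darts
    have hsum : (κ.darts.map (fun d => ((γ d.toProd.2 : ℕ) : ℤ)
        - ((γ d.toProd.1 : ℕ) : ℤ))).sum = 0 := by
      simpa using telescope_darts (G := G) (fun v => ((γ v : ℕ) : ℤ)) κ
    rw [hsum] at hb1 hb2
    have hlen : κ.darts.length = κ.length := κ.length_darts
    rw [hlen] at hb1 hb2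
    set D := κ.darts.countP (fun d => decide (γ d.toProd.2 < γ d.toProd.1)) with hD
    set A := κ.darts.countP (fun d => decide (γ d.toProd.1 < γ d.toProd.2)) with hA
    have h1 : (κ.length : ℤ) ≤ c * D := by omega
    have h2 : (κ.length : ℤ) ≤ c * A := by omega
    refine le_min ?_ ?_
    · rw [div_le_iff₀ hcQ]
      exact_mod_cast (by exact_mod_cast h1.trans_eq (mul_comm _ _) :
        (κ.length : ℚ) ≤ D * c)
    · rw [div_le_iff₀ hcQ]
      exact_mod_cast (by exact_mod_cast h2.trans_eq (mul_comm _ _) :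
        (κ.length : ℚ) ≤ A * c)
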